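/- In the Gaussian location model, define the hard-thresholding estimator θ̂_n = ȳ_n·1{|ȳ_n| > c_n} with threshold c_n > 0 satisfying √n·c_n → ∞ and c_n → 0. Then θ̂_n is consistent for θ and satisfies P_{n,θ}(θ̂_n = 0) → 1 whenever θ = 0, and P_{n,θ}(θ̂_n = ȳ_n) → 1 whenever θ ≠ 0; hence sup_{θ∈ℝ} E_{n,θ}[n(θ̂_n − θ)²] → ∞. -/

import Mathlib

open MeasureTheory ProbabilityTheory Filter Topology

/-- Joint law of a sample of size `n` of i.i.d. `N(θ,1)` observations. -/
noncomputable def gaussP (n : ℕ) (θ : ℝ) : Measure (Fin n → ℝ) :=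
  Measure.pi fun _ => gaussianReal θ 1

/-- The sample mean of `n` observations. -/
noncomputable def sampleMean (n : ℕ) (y : Fin n → ℝ) : ℝ := (∑ t, y t) / n

/-- The hard-thresholding estimator with threshold `c n`. -/
noncomputable def hardThresh (c : ℕ → ℝ) (n : ℕ) (y : Fin n → ℝ) : ℝ :=
  if c n < |sampleMean n y| then sampleMean n y else 0

open Real NNReal ENNReal in
instance (n : ℕ) (θ : ℝ) : IsProbabilityMeasure (gaussP n θ) := by
  unfold gaussP; infer_instance

namespace Stmt18Aux

open Real NNReal ENNReal

lemma pdf_shift (θ t x : ℝ) :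
    Real.exp (t * x) * gaussianPDFReal θ 1 x
      = Real.exp (t * θ + t ^ 2 / 2) * gaussianPDFReal (θ + t) 1 x := by
  simp only [gaussianPDFReal, NNReal.coe_one, mul_one]
  rw [mul_left_comm, mul_left_comm (rexp (t * θ + t ^ 2 / 2)), ← Real.exp_add, ← Real.exp_add]
  congr 2
  ring

lemma gauss_exp_integrable (θ t : ℝ) :
    Integrable (fun x => Real.exp (t * x)) (gaussianReal θ 1) := by
  rw [gaussianReal_of_var_ne_zero θ one_ne_zero]
  rw [integrable_withDensity_iff (measurable_gaussianPDF θ 1)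
    (ae_of_all _ fun x => ENNReal.ofReal_lt_top)]
  have : (fun x => Real.exp (t * x) * (gaussianPDF θ 1 x).toReal)
      = fun x => Real.exp (t * θ + t ^ 2 / 2) * gaussianPDFReal (θ + t) 1 x := by
    ext x
    rw [gaussianPDF, ENNReal.toReal_ofReal (gaussianPDFReal_nonneg θ 1 x), pdf_shift]
  rw [this]
  exact (integrable_gaussianPDFReal _ _).const_mul _

lemma gauss_mgf (θ t : ℝ) :
    ∫ x, Real.exp (t * x) ∂(gaussianReal θ 1) = Real.exp (t * θ + t ^ 2 / 2) := by
  rw [gaussianReal_of_var_ne_zero θ one_ne_zero]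
  have h : gaussianPDF θ 1 = fun x => ((Real.toNNReal (gaussianPDFReal θ 1 x) : ℝ≥0) : ℝ≥0∞) := rfl
  rw [h, integral_withDensity_eq_integral_smul
    (by exact (measurable_gaussianPDFReal θ 1).real_toNNReal)]
  have : (fun x => Real.toNNReal (gaussianPDFReal θ 1 x) • Real.exp (t * x))
      = fun x => Real.exp (t * θ + t ^ 2 / 2) * gaussianPDFReal (θ + t) 1 x := by
    ext x
    rw [NNReal.smul_def, smul_eq_mul, Real.coe_toNNReal _ (gaussianPDFReal_nonneg θ 1 x),
      mul_comm, pdf_shift]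
  rw [this, integral_const_mul, integral_gaussianPDFReal_eq_one _ one_ne_zero, mul_one]

lemma sum_exp_integrable (n : ℕ) (θ t : ℝ) :
    Integrable (fun y => Real.exp (t * ∑ i, y i)) (gaussP n θ) := by
  letI : MeasureSpace ℝ := ⟨gaussianReal θ 1⟩
  haveI : SigmaFinite (volume : Measure ℝ) := (inferInstanceAs (SigmaFinite (gaussianReal θ 1)))
  have hv : gaussP n θ = (volume : Measure (Fin n → ℝ)) := by
    rw [volume_pi]; rfl
  rw [hv]
  have : (fun y : Fin n → ℝ => Real.exp (t * ∑ i, y i))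
      = fun y => ∏ i, Real.exp (t * y i) := by
    ext y
    rw [Finset.mul_sum, Real.exp_sum]
  rw [this]
  exact Integrable.fintype_prod (fun _ => gauss_exp_integrable θ t)

lemma sum_mgf (n : ℕ) (θ t : ℝ) :
    mgf (fun y => ∑ i, y i) (gaussP n θ) t = Real.exp (t * θ + t ^ 2 / 2) ^ n := by
  letI : MeasureSpace ℝ := ⟨gaussianReal θ 1⟩
  haveI : SigmaFinite (volume : Measure ℝ) := (inferInstanceAs (SigmaFinite (gaussianReal θ 1)))
  have hv : gaussP n θ = (volume : Measure (Fin n → ℝ)) := by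
    rw [volume_pi]; rfl
  rw [mgf, hv]
  have : (fun y : Fin n → ℝ => Real.exp (t * ∑ i, y i))
      = fun y => ∏ i, Real.exp (t * y i) := by
    ext y
    rw [Finset.mul_sum, Real.exp_sum]
  rw [this, integral_fintype_prod_volume_eq_pow (ι := Fin n) (fun x => Real.exp (t * x)), Fintype.card_fin]
  congr 1
  exact gauss_mgf θ t

lemma measurable_sampleMean (n : ℕ) : Measurable (sampleMean n) := by
  unfold sampleMean
  exact (Finset.measurable_sum _ (fun i _ => measurable_pi_apply i)).div_const _

lemma gauss_tail (n : ℕ) (hn : 1 ≤ n) (θ t : ℝ) (ht : 0 < t) :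
    gaussP n θ {y | t ≤ |sampleMean n y - θ|}
      ≤ ENNReal.ofReal (2 * Real.exp (-((n : ℝ) * t ^ 2) / 2)) := by
  have hnpos : (0:ℝ) < n := by exact_mod_cast hn
  have hup : (gaussP n θ {y | n * θ + n * t ≤ ∑ i, y i}).toReal
      ≤ Real.exp (-((n : ℝ) * t ^ 2) / 2) := by
    have h := measure_ge_le_exp_mul_mgf (μ := gaussP n θ) (X := fun y => ∑ i, y i)
      (t := t) (n * θ + n * t) ht.le (sum_exp_integrable n θ t)
    rw [sum_mgf, ← Real.exp_nat_mul, ← Real.exp_add, measureReal_def] at h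
    convert h using 2
    ring
  have hlow : (gaussP n θ {y | (∑ i, y i) ≤ n * θ - n * t}).toReal
      ≤ Real.exp (-((n : ℝ) * t ^ 2) / 2) := by
    have h := measure_le_le_exp_mul_mgf (μ := gaussP n θ) (X := fun y => ∑ i, y i)
      (t := -t) (n * θ - n * t) (neg_nonpos.mpr ht.le) (sum_exp_integrable n θ (-t))
    rw [sum_mgf, ← Real.exp_nat_mul, ← Real.exp_add, measureReal_def] at h
    convert h using 2
    ring
  have hsub : {y : Fin n → ℝ | t ≤ |sampleMean n y - θ|}
      ⊆ {y | n * θ + n * t ≤ ∑ i, y i} ∪ {y | (∑ i, y i) ≤ n * θ - n * t} := by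
    intro y hy
    simp only [Set.mem_setOf_eq, Set.mem_union] at *
    rcases le_abs.mp hy with h | h
    · left
      have : θ + t ≤ sampleMean n y := by linarith
      rw [sampleMean, le_div_iff₀ hnpos] at this
      linarith [this]
    · right
      have : sampleMean n y ≤ θ - t := by linarith [abs_nonneg (sampleMean n y - θ)]
      rw [sampleMean, div_le_iff₀ hnpos] at this
      linarith [this]
  calc gaussP n θ {y | t ≤ |sampleMean n y - θ|}
      ≤ gaussP n θ {y | n * θ + n * t ≤ ∑ i, y i}
        + gaussP n θ {y | (∑ i, y i) ≤ n * θ - n * t} :=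
        le_trans (measure_mono hsub) (measure_union_le _ _)
    _ ≤ ENNReal.ofReal (Real.exp (-((n : ℝ) * t ^ 2) / 2))
        + ENNReal.ofReal (Real.exp (-((n : ℝ) * t ^ 2) / 2)) := by
        gcongr
        · rw [← ENNReal.ofReal_toReal (measure_ne_top _ _)]
          exact ENNReal.ofReal_le_ofReal hup
        · rw [← ENNReal.ofReal_toReal (measure_ne_top _ _)]
          exact ENNReal.ofReal_le_ofReal hlow
    _ = ENNReal.ofReal (2 * Real.exp (-((n : ℝ) * t ^ 2) / 2)) := by
        rw [← ENNReal.ofReal_add (Real.exp_nonneg _) (Real.exp_nonneg _)]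
        congr 1; ring

lemma gauss_reflect (θ : ℝ) :
    MeasurePreserving (fun x : ℝ => 2 * θ - x) (gaussianReal θ 1) (gaussianReal θ 1) := by
  have hm : Measurable (fun x : ℝ => 2 * θ - x) := measurable_const.sub measurable_id
  refine ⟨hm, ?_⟩
  have h1 : (fun x : ℝ => 2 * θ - x) = (fun x => 2 * θ + x) ∘ (fun x => (-1) * x) := by
    ext x; simp; ring
  have hg : Measurable (fun x : ℝ => 2 * θ + x) := by fun_prop
  have hf : Measurable (fun x : ℝ => (-1 : ℝ) * x) := by fun_prop
  have hvar : (.mk ((-1:ℝ)^2) (sq_nonneg _) : ℝ≥0) * 1 = 1 := by ext; norm_num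
  rw [h1, ← Measure.map_map hg hf, gaussianReal_map_const_mul, hvar,
    gaussianReal_map_const_add]
  norm_num
  congr 1
  ring

lemma symm_half (n : ℕ) (hn : 1 ≤ n) (θ : ℝ) :
    (1 : ℝ≥0∞) / 2 ≤ gaussP n θ {y | sampleMean n y ≤ θ} := by
  have hnpos : (0:ℝ) < n := by exact_mod_cast hn
  have hmp : MeasurePreserving (fun y : Fin n → ℝ => fun i => 2 * θ - y i)
      (gaussP n θ) (gaussP n θ) :=
    measurePreserving_pi _ _ (fun _ => gauss_reflect θ)
  have hset : (fun y : Fin n → ℝ => fun i => 2 * θ - y i) ⁻¹' {y | sampleMean n y ≤ θ}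
      = {y | θ ≤ sampleMean n y} := by
    ext y
    simp only [Set.mem_preimage, Set.mem_setOf_eq, sampleMean, Finset.sum_sub_distrib,
      Finset.sum_const, Finset.card_univ, Fintype.card_fin, nsmul_eq_mul]
    rw [div_le_iff₀ hnpos, le_div_iff₀ hnpos]
    constructor <;> intro h <;> nlinarith
  have heq : gaussP n θ {y | sampleMean n y ≤ θ} = gaussP n θ {y | θ ≤ sampleMean n y} := by
    have hns : NullMeasurableSet {y | sampleMean n y ≤ θ} (gaussP n θ) :=
      (measurable_sampleMean n measurableSet_Iic).nullMeasurableSet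
    rw [← hset]
    exact (hmp.measure_preimage hns).symm
  have hcover : (Set.univ : Set (Fin n → ℝ))
      ⊆ {y | sampleMean n y ≤ θ} ∪ {y | θ ≤ sampleMean n y} := by
    intro y _
    rcases le_total (sampleMean n y) θ with h | h
    · exact Or.inl h
    · exact Or.inr h
  have h1 : (1 : ℝ≥0∞) ≤ gaussP n θ {y | sampleMean n y ≤ θ}
      + gaussP n θ {y | θ ≤ sampleMean n y} := by
    calc (1 : ℝ≥0∞) = gaussP n θ Set.univ := (measure_univ).symm
      _ ≤ _ := le_trans (measure_mono hcover) (measure_union_le _ _)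
  rw [← heq, ← two_mul] at h1
  rw [ENNReal.div_le_iff_le_mul (Or.inl two_ne_zero) (Or.inl ENNReal.ofNat_ne_top)]
  rwa [mul_comm]

lemma tail_lim (t : ℕ → ℝ) (h : Tendsto (fun n : ℕ => (n : ℝ) * t n ^ 2) atTop atTop) :
    Tendsto (fun n : ℕ => ENNReal.ofReal (2 * Real.exp (-((n : ℝ) * t n ^ 2) / 2)))
      atTop (𝓝 0) := by
  have h1 : Tendsto (fun n : ℕ => -((n : ℝ) * t n ^ 2) / 2) atTop atBot := by
    have h2 := tendsto_neg_atTop_atBot.comp (h.atTop_mul_const (by norm_num : (0:ℝ) < 1/2))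
    have heq : (fun n : ℕ => -((n : ℝ) * t n ^ 2) / 2)
        = (fun x : ℝ => -x) ∘ (fun n : ℕ => (n : ℝ) * t n ^ 2 * (1/2)) := by
      ext n; simp; ring
    rw [heq]; exact h2
  have h2 : Tendsto (fun n : ℕ => 2 * Real.exp (-((n : ℝ) * t n ^ 2) / 2)) atTop (𝓝 0) := by
    simpa using (Real.tendsto_exp_atBot.comp h1).const_mul 2
  have := (ENNReal.continuous_ofReal.tendsto 0).comp h2
  rwa [ENNReal.ofReal_zero] at this

/-- From a bound on the complement, a lower bound on a probability. -/
lemma one_sub_le {α : Type*} [MeasurableSpace α] (μ : Measure α) [IsProbabilityMeasure μ]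
    {A B : Set α} (h : ∀ y, y ∉ A → y ∈ B) {T : ℝ≥0∞} (hB : μ B ≤ T) :
    1 - T ≤ μ A := by
  have hcover : (Set.univ : Set α) ⊆ A ∪ B := by
    intro y _
    by_cases hy : y ∈ A
    · exact Or.inl hy
    · exact Or.inr (h y hy)
  have h1 : (1 : ℝ≥0∞) ≤ μ A + T := by
    calc (1 : ℝ≥0∞) = μ Set.univ := (measure_univ).symm
      _ ≤ μ A + μ B := le_trans (measure_mono hcover) (measure_union_le _ _)
      _ ≤ μ A + T := by gcongr
  exact tsub_le_iff_right.mpr h1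

end Stmt18Aux

open Real NNReal ENNReal Stmt18Aux in
theorem stmt_18 (c : ℕ → ℝ) (hcpos : ∀ n, 0 < c n)
    (hc1 : Tendsto (fun n : ℕ => Real.sqrt n * c n) atTop atTop)
    (hc0 : Tendsto c atTop (𝓝 0)) :
    (∀ θ : ℝ, ∀ ε > (0 : ℝ),
      Tendsto (fun n => gaussP n θ {y | ε ≤ |hardThresh c n y - θ|}) atTop (𝓝 0)) ∧
    (∀ θ : ℝ, θ = 0 →
      Tendsto (fun n => gaussP n θ {y | hardThresh c n y = 0}) atTop (𝓝 1)) ∧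
    (∀ θ : ℝ, θ ≠ 0 →
      Tendsto (fun n => gaussP n θ {y | hardThresh c n y = sampleMean n y}) atTop (𝓝 1)) ∧
    Tendsto (fun n : ℕ => ⨆ θ : ℝ,
        ∫⁻ y, ENNReal.ofReal ((n : ℝ) * (hardThresh c n y - θ) ^ 2) ∂(gaussP n θ))
      atTop (𝓝 ⊤) := by
  have hsq : Tendsto (fun n : ℕ => (n:ℝ) * (c n)^2) atTop atTop := by
    have heq : (fun n : ℕ => (n:ℝ) * (c n)^2) = fun n : ℕ => (Real.sqrt n * c n)^2 := by
      ext n; rw [mul_pow, Real.sq_sqrt (Nat.cast_nonneg n)]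
    rw [heq]
    simp_rw [pow_two]
    exact hc1.atTop_mul_atTop₀ hc1
  refine ⟨?_, ?_, ?_, ?_⟩
  · -- consistency
    intro θ ε hε
    have hev : ∀ᶠ n in atTop, gaussP n θ {y | ε ≤ |hardThresh c n y - θ|}
        ≤ ENNReal.ofReal (2 * Real.exp (-((n:ℝ) * ((fun _ : ℕ => ε/2) n)^2) / 2)) := by
      filter_upwards [eventually_ge_atTop 1, hc0.eventually (gt_mem_nhds (half_pos hε))]
        with n hn hcn
      refine le_trans (measure_mono ?_) (gauss_tail n hn θ (ε/2) (half_pos hε))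
      intro y hy
      simp only [Set.mem_setOf_eq, hardThresh] at *
      by_cases h : c n < |sampleMean n y|
      · rw [if_pos h] at hy; linarith
      · rw [if_neg h] at hy
        push_neg at h
        have h2 : |θ| - |sampleMean n y| ≤ |sampleMean n y - θ| := by
          rw [abs_sub_comm]; exact abs_sub_abs_le_abs_sub θ (sampleMean n y)
        rw [zero_sub, abs_neg] at hy
        linarith [abs_nonneg (sampleMean n y)]
    have hlim := tail_lim (fun _ : ℕ => ε/2)
      (tendsto_natCast_atTop_atTop.atTop_mul_const (by positivity))
    exact tendsto_of_tendsto_of_tendsto_of_le_of_le' tendsto_const_nhds hlim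
      (Eventually.of_forall fun n => zero_le) hev
  · -- P(θ̂ = 0) → 1 at θ = 0
    intro θ hθ
    subst hθ
    have htail : Tendsto
        (fun n : ℕ => ENNReal.ofReal (2 * Real.exp (-((n:ℝ) * (c n)^2) / 2))) atTop (𝓝 0) :=
      tail_lim c hsq
    have hlow : ∀ᶠ n : ℕ in atTop,
        1 - ENNReal.ofReal (2 * Real.exp (-((n:ℝ) * (c n)^2) / 2))
          ≤ gaussP n 0 {y | hardThresh c n y = 0} := by
      filter_upwards [eventually_ge_atTop 1] with n hn
      refine one_sub_le _ ?_ (gauss_tail n hn 0 (c n) (hcpos n))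
      intro y hy
      simp only [Set.mem_setOf_eq, hardThresh] at hy ⊢
      by_cases h : c n < |sampleMean n y|
      · rw [sub_zero]; exact h.le
      · exact absurd (if_neg h) hy
    have hone : Tendsto (fun n : ℕ =>
        1 - ENNReal.ofReal (2 * Real.exp (-((n:ℝ) * (c n)^2) / 2))) atTop (𝓝 1) := by
      have := ENNReal.Tendsto.sub (tendsto_const_nhds (x := (1:ℝ≥0∞))) htail
        (Or.inl ENNReal.one_ne_top)
      simpa using this
    exact tendsto_of_tendsto_of_tendsto_of_le_of_le' hone tendsto_const_nhds hlow
      (Eventually.of_forall fun n => prob_le_one)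
  · -- P(θ̂ = ȳ) → 1 at θ ≠ 0
    intro θ hθ
    have htpos : (0:ℝ) < |θ|/2 := half_pos (abs_pos.mpr hθ)
    have htail := tail_lim (fun _ : ℕ => |θ|/2)
      (tendsto_natCast_atTop_atTop.atTop_mul_const (by positivity))
    have hlow : ∀ᶠ n : ℕ in atTop,
        1 - ENNReal.ofReal (2 * Real.exp (-((n:ℝ) * ((fun _ : ℕ => |θ|/2) n)^2) / 2))
          ≤ gaussP n θ {y | hardThresh c n y = sampleMean n y} := by
      filter_upwards [eventually_ge_atTop 1, hc0.eventually (gt_mem_nhds htpos)] with n hn hcn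
      refine one_sub_le _ ?_ (gauss_tail n hn θ (|θ|/2) htpos)
      intro y hy
      simp only [Set.mem_setOf_eq, hardThresh] at hy ⊢
      by_cases h : c n < |sampleMean n y|
      · exact absurd (if_pos h) hy
      · push_neg at h
        have h2 : |θ| - |sampleMean n y| ≤ |sampleMean n y - θ| := by
          rw [abs_sub_comm]; exact abs_sub_abs_le_abs_sub θ (sampleMean n y)
        linarith
    have hone : Tendsto (fun n : ℕ =>
        1 - ENNReal.ofReal (2 * Real.exp (-((n:ℝ) * ((fun _ : ℕ => |θ|/2) n)^2) / 2)))
        atTop (𝓝 1) := by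
      have := ENNReal.Tendsto.sub (tendsto_const_nhds (x := (1:ℝ≥0∞))) htail
        (Or.inl ENNReal.one_ne_top)
      simpa using this
    exact tendsto_of_tendsto_of_tendsto_of_le_of_le' hone tendsto_const_nhds hlow
      (Eventually.of_forall fun n => prob_le_one)
  · -- sup risk → ∞
    rw [ENNReal.tendsto_nhds_top_iff_nat]
    intro k
    have htail2 : Tendsto
        (fun n : ℕ => ENNReal.ofReal (2 * Real.exp (-((n:ℝ) * ((fun m : ℕ => 2 * c m) n)^2) / 2)))
        atTop (𝓝 0) := by
      apply tail_lim
      have heq : (fun n : ℕ => (n:ℝ) * ((fun m : ℕ => 2 * c m) n)^2)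
          = fun n : ℕ => ((n:ℝ) * (c n)^2) * 4 := by ext n; ring
      rw [heq]
      exact hsq.atTop_mul_const (by norm_num)
    filter_upwards [eventually_ge_atTop 1,
      htail2.eventually (gt_mem_nhds (by
        rw [ENNReal.div_pos_iff]; norm_num : (0:ℝ≥0∞) < 1/4)),
      hsq.eventually_ge_atTop (4 * ((k:ℝ) + 1))] with n hn hT hnc
    set E : Set (Fin n → ℝ) := {y | ¬ c n < |sampleMean n y|} with hEdef
    have hE : MeasurableSet E := by
      have : MeasurableSet {y : Fin n → ℝ | c n < |sampleMean n y|} :=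
        measurableSet_lt measurable_const (measurable_sampleMean n).abs
      rw [hEdef, ← Set.compl_setOf]
      exact this.compl
    -- lower bound on the measure of E under θ = c n
    have hquarter : (1:ℝ≥0∞)/4 ≤ gaussP n (c n) E := by
      have hhalf := symm_half n hn (c n)
      have hsubs : {y : Fin n → ℝ | sampleMean n y ≤ c n}
          ⊆ E ∪ {y | 2 * c n ≤ |sampleMean n y - c n|} := by
        intro y hy
        simp only [hEdef, Set.mem_setOf_eq, Set.mem_union] at *
        by_cases h : c n < |sampleMean n y|
        · right
          rcases abs_cases (sampleMean n y) with ⟨he, _⟩ | ⟨he, _⟩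
          · linarith [he ▸ h]
          · refine le_abs.mpr (Or.inr ?_)
            rw [he] at h
            linarith
        · left; exact h
      have hstep : (1:ℝ≥0∞)/2 ≤ gaussP n (c n) E + 1/4 := by
        calc (1:ℝ≥0∞)/2 ≤ gaussP n (c n) {y | sampleMean n y ≤ c n} := hhalf
          _ ≤ gaussP n (c n) E + gaussP n (c n) {y | 2 * c n ≤ |sampleMean n y - c n|} :=
            le_trans (measure_mono hsubs) (measure_union_le _ _)
          _ ≤ gaussP n (c n) E + 1/4 := by
            gcongr
            exact le_trans (gauss_tail n hn (c n) (2 * c n) (by linarith [hcpos n])) hT.le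
      have hhalfeq : (1:ℝ≥0∞)/4 + 1/4 = 1/2 := by
        rw [ENNReal.div_add_div_same]
        rw [show (1+1:ℝ≥0∞) = 2 by norm_num]
        rw [ENNReal.div_eq_div_iff] <;> norm_num
      rw [← hhalfeq] at hstep
      exact (ENNReal.add_le_add_iff_right (by rw [one_div]; exact ENNReal.inv_ne_top.mpr (by norm_num))).mp hstep
    -- integrand is constant on E
    have hint : ∫⁻ y in E, ENNReal.ofReal ((n : ℝ) * (hardThresh c n y - c n) ^ 2)
          ∂(gaussP n (c n))
        = ENNReal.ofReal ((n:ℝ) * (c n)^2) * gaussP n (c n) E := by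
      rw [setLIntegral_congr_fun hE
        (fun y (hy : y ∈ E) => show ENNReal.ofReal ((n : ℝ) * (hardThresh c n y - c n) ^ 2)
            = ENNReal.ofReal ((n:ℝ) * (c n)^2) by
          have h0 : hardThresh c n y = 0 := if_neg hy
          rw [h0, zero_sub, neg_sq]), setLIntegral_const]
    have hofk : (k:ℝ≥0∞) < ENNReal.ofReal ((k:ℝ)+1) := by
      rw [ENNReal.ofReal_add (Nat.cast_nonneg k) zero_le_one, ENNReal.ofReal_natCast,
        ENNReal.ofReal_one]
      exact ENNReal.lt_add_right (ENNReal.natCast_ne_top k) one_ne_zero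
    calc (k:ℝ≥0∞) < ENNReal.ofReal ((k:ℝ)+1) := hofk
      _ = ENNReal.ofReal (4*((k:ℝ)+1)) * (1/4) := by
          rw [show (4*((k:ℝ)+1)) = ((k:ℝ)+1)*4 by ring,
            ENNReal.ofReal_mul (by positivity), ENNReal.ofReal_ofNat, mul_assoc,
            mul_one_div, ENNReal.div_self (by norm_num) (by norm_num), mul_one]
      _ ≤ ENNReal.ofReal ((n:ℝ)*(c n)^2) * gaussP n (c n) E := by
          gcongr
      _ = ∫⁻ y in E, ENNReal.ofReal ((n : ℝ) * (hardThresh c n y - c n) ^ 2)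
            ∂(gaussP n (c n)) := hint.symm
      _ ≤ ∫⁻ y, ENNReal.ofReal ((n : ℝ) * (hardThresh c n y - c n) ^ 2)
            ∂(gaussP n (c n)) := setLIntegral_le_lintegral _ _
      _ ≤ ⨆ θ : ℝ, ∫⁻ y, ENNReal.ofReal ((n : ℝ) * (hardThresh c n y - θ) ^ 2)
            ∂(gaussP n θ) :=
          le_iSup (fun θ : ℝ => ∫⁻ y,
            ENNReal.ofReal ((n : ℝ) * (hardThresh c n y - θ) ^ 2) ∂(gaussP n θ)) (c n)
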